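/- For any edge e of a rooted spanning tree T, at most one edge among any set of pairwise incomparable descendant edges of e can be an edge in which e is down-interested; consequently the set of descendant edges of e in which e is down-interested forms a downward path within T_e. -/
import Mathlib


open Finset

/-- Total weight of graph edges with one endpoint in `A` and the other in `B`
(summed over ordered pairs). -/
def betw {V : Type*} [Fintype V] (w : V → V → ℝ) (A B : Finset V) : ℝ :=
  ∑ u ∈ A, ∑ v ∈ B, w u v

/-- Weight of the cut `(S, V \\ S)`: total weight of edges leaving `S`. -/
def cutw {V : Type*} [Fintype V] [DecidableEq V] (w : V → V → ℝ) (S : Finset V) : ℝ :=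
  betw w S Sᶜ

lemma betw_mono_left {V : Type*} [Fintype V] (w : V → V → ℝ) (hnn : ∀ u v, 0 ≤ w u v)
    {A A' : Finset V} (h : A ⊆ A') (B : Finset V) : betw w A B ≤ betw w A' B := by
  apply Finset.sum_le_sum_of_subset_of_nonneg h
  intro i _ _
  exact Finset.sum_nonneg fun j _ => hnn i j

/-- The descendant edges of `e` in which `e` is down-interested form a downward
path within `Te`: (a) down-interest in an edge with subtree `B'` implies
down-interest in any ancestor edge, whose subtree `B''` contains `B'`;
(b) at most one of any two incomparable descendant edges (disjoint subtrees
`B', B'' ⊆ Te`) can be down-interesting for `e`. -/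
theorem stmt_6 {V : Type*} [Fintype V] [DecidableEq V] (w : V → V → ℝ)
    (hsym : ∀ u v, w u v = w v u) (hnn : ∀ u v, 0 ≤ w u v)
    (Te B' B'' : Finset V) (hB' : B' ⊆ Te) (hB'' : B'' ⊆ Te) :
    (B' ⊆ B'' → cutw w Te < 2 * betw w B' Teᶜ → cutw w Te < 2 * betw w B'' Teᶜ) ∧
    (Disjoint B' B'' →
      ¬ (cutw w Te < 2 * betw w B' Teᶜ ∧ cutw w Te < 2 * betw w B'' Teᶜ)) := by
  constructor
  · intro hsub h
    have := betw_mono_left w hnn hsub Teᶜ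
    linarith
  · rintro hdis ⟨h1, h2⟩
    have hsum : betw w B' Teᶜ + betw w B'' Teᶜ ≤ cutw w Te := by
      have : betw w (B' ∪ B'') Teᶜ = betw w B' Teᶜ + betw w B'' Teᶜ := by
        unfold betw
        exact Finset.sum_union hdis
      have hmono := betw_mono_left w hnn (Finset.union_subset hB' hB'') Teᶜ
      unfold cutw at *
      linarith
    linarith
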